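/- Under assumptions (A1)–(A4) with μ > 2, for every (f1,f2), (g1,g2) ∈ 𝒦 and every η ∈ [s0,r0] one has |Φ1(η; f1,f2) − Φ1(η; g1,g2)| ≤ Φ̃1·‖(f1,f2) − (g1,g2)‖, where Φ̃1 = Ẽ1/(L1m·(μ+ν−1)·s0^(μ+ν−1)) + L̃1/(L1m²·(2μ+ν−1)·s0^(2μ+ν−1)), Ẽ1 = 2a·[Ñ1/(L1m·(μ−2)·s0^(μ−2)) + N1M·L̃1/(L1m²·(3μ−2)·s0^(3μ−2))] + D1·[K̃1/(H_inf·L1m·(2μ+ν−1)·s0^(2μ+ν−1)) + (K1M/(H_inf·L1m))·(H̃/(H_inf·(2μ+ν−1)·s0^(2μ+ν−1)) + L̃1/(L1m·(3μ+ν−1)·s0^(3μ+ν−1)))], H_inf = (K1m/(μ+ν−1))·(s0^(−(μ+ν−1)) − r0^(−(μ+ν−1))), and H̃ = (K̃1·s0^(−(μ+ν−1)) + K̃2·r0^(−(μ+ν−1)))/(μ+ν−1). -/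

import Mathlib

open MeasureTheory Filter Topology

noncomputable section

/-- The bundle of fixed constants of the problem. -/
structure Cst where
  nu : ℝ
  mu : ℝ
  a : ℝ
  D1 : ℝ
  D2 : ℝ
  Q : ℝ
  D1s : ℝ
  D2s : ℝ
  L1m : ℝ
  L1M : ℝ
  N1m : ℝ
  N1M : ℝ
  K1m : ℝ
  K1M : ℝ
  L2m : ℝ
  L2M : ℝ
  N2m : ℝ
  N2M : ℝ
  K2m : ℝ
  K2M : ℝ
  Lt1 : ℝ
  Nt1 : ℝ
  Kt1 : ℝ
  Lt2 : ℝ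
  Nt2 : ℝ
  Kt2 : ℝ

/-- The space `C[s0,r0]`, modeled as real functions continuous on `[s0,r0]`. -/
def C1 (s0 r0 : ℝ) : Set (ℝ → ℝ) := {f | ContinuousOn f (Set.Icc s0 r0)}

/-- The set `ℳ ⊆ C_b[r0,∞)`: bounded continuous functions on `[r0,∞)` with
`f(r0) = 0` and `f(η) → -1` as `η → ∞`. -/
def Mset (r0 : ℝ) : Set (ℝ → ℝ) :=
  {f | ContinuousOn f (Set.Ici r0) ∧ (∃ C, ∀ x ∈ Set.Ici r0, |f x| ≤ C) ∧
    f r0 = 0 ∧ Tendsto f atTop (𝓝 (-1))}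

/-- Sup norm of `f` over the set `S`. -/
def supOn (S : Set ℝ) (f : ℝ → ℝ) : ℝ := ⨆ x : S, |f x.1|

/-- Norm of the difference of two pairs in `𝒦 = C[s0,r0] × ℳ`. -/
def pairNorm (s0 r0 : ℝ) (f1 f2 g1 g2 : ℝ → ℝ) : ℝ :=
  max (supOn (Set.Icc s0 r0) (f1 - g1)) (supOn (Set.Ici r0) (f2 - g2))

/-- Positivity assumptions on all the fixed constants and on `s0, r0`. -/
def PosC (c : Cst) (s0 r0 : ℝ) : Prop :=
  0 < c.a ∧ 0 < c.nu ∧ c.nu < 1 ∧ 2 < c.mu ∧ 0 < s0 ∧ s0 < r0 ∧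
  0 < c.D1 ∧ 0 < c.D2 ∧ 0 < c.Q ∧ 0 < c.D1s ∧ 0 < c.D2s ∧
  0 < c.L1m ∧ 0 < c.L1M ∧ 0 < c.N1m ∧ 0 < c.N1M ∧ 0 < c.K1m ∧ 0 < c.K1M ∧
  0 < c.L2m ∧ 0 < c.L2M ∧ 0 < c.N2m ∧ 0 < c.N2M ∧ 0 < c.K2m ∧ 0 < c.K2M ∧
  0 < c.Lt1 ∧ 0 < c.Nt1 ∧ 0 < c.Kt1 ∧ 0 < c.Lt2 ∧ 0 < c.Nt2 ∧ 0 < c.Kt2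

/-- Positivity assumptions on all the fixed constants (no `s0, r0`). -/
def PosCst (c : Cst) : Prop :=
  0 < c.a ∧ 0 < c.nu ∧ c.nu < 1 ∧ 2 < c.mu ∧
  0 < c.D1 ∧ 0 < c.D2 ∧ 0 < c.Q ∧ 0 < c.D1s ∧ 0 < c.D2s ∧
  0 < c.L1m ∧ 0 < c.L1M ∧ 0 < c.N1m ∧ 0 < c.N1M ∧ 0 < c.K1m ∧ 0 < c.K1M ∧
  0 < c.L2m ∧ 0 < c.L2M ∧ 0 < c.N2m ∧ 0 < c.N2M ∧ 0 < c.K2m ∧ 0 < c.K2M ∧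
  0 < c.Lt1 ∧ 0 < c.Nt1 ∧ 0 < c.Kt1 ∧ 0 < c.Lt2 ∧ 0 < c.Nt2 ∧ 0 < c.Kt2

/-- Assumptions (A1)–(A4): continuity of the images of `L, N, K`, the two-sided
bounds and the Lipschitz bounds. -/
def Assum (c : Cst) (s0 r0 : ℝ) (L1 N1 K1 L2 N2 K2 : (ℝ → ℝ) → ℝ → ℝ) : Prop :=
  (∀ f1 ∈ C1 s0 r0,
    ContinuousOn (L1 f1) (Set.Icc s0 r0) ∧ ContinuousOn (N1 f1) (Set.Icc s0 r0) ∧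
      ContinuousOn (K1 f1) (Set.Icc s0 r0)) ∧
  (∀ f2 ∈ Mset r0,
    ContinuousOn (L2 f2) (Set.Ici r0) ∧ ContinuousOn (N2 f2) (Set.Ici r0) ∧
      ContinuousOn (K2 f2) (Set.Ici r0)) ∧
  (∀ f1 ∈ C1 s0 r0, ∀ η ∈ Set.Icc s0 r0,
    c.L1m * η ^ c.mu ≤ L1 f1 η ∧ L1 f1 η ≤ c.L1M * η ^ c.mu ∧
    c.N1m * η ^ (-c.mu) ≤ N1 f1 η ∧ N1 f1 η ≤ c.N1M * η ^ (-c.mu) ∧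
    c.K1m * η ^ (-c.mu) ≤ K1 f1 η ∧ K1 f1 η ≤ c.K1M * η ^ (-c.mu)) ∧
  (∀ f2 ∈ Mset r0, ∀ η ∈ Set.Ici r0,
    c.L2m * η ^ c.mu ≤ L2 f2 η ∧ L2 f2 η ≤ c.L2M * η ^ c.mu ∧
    c.N2m * η ^ (-c.mu) ≤ N2 f2 η ∧ N2 f2 η ≤ c.N2M * η ^ (-c.mu) ∧
    c.K2m * η ^ (-c.mu) ≤ K2 f2 η ∧ K2 f2 η ≤ c.K2M * η ^ (-c.mu)) ∧
  (∀ f1 ∈ C1 s0 r0, ∀ g1 ∈ C1 s0 r0, ∀ η ∈ Set.Icc s0 r0,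
    |L1 f1 η - L1 g1 η| ≤ c.Lt1 * supOn (Set.Icc s0 r0) (f1 - g1) ∧
    |N1 f1 η - N1 g1 η| ≤ c.Nt1 * supOn (Set.Icc s0 r0) (f1 - g1) ∧
    |K1 f1 η - K1 g1 η| ≤ c.Kt1 * η ^ (-c.mu) * supOn (Set.Icc s0 r0) (f1 - g1)) ∧
  (∀ f2 ∈ Mset r0, ∀ g2 ∈ Mset r0, ∀ η ∈ Set.Ici r0,
    |L2 f2 η - L2 g2 η| ≤ c.Lt2 * supOn (Set.Ici r0) (f2 - g2) ∧
    |N2 f2 η - N2 g2 η| ≤ c.Nt2 * supOn (Set.Ici r0) (f2 - g2) ∧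
    |K2 f2 η - K2 g2 η| ≤ c.Kt2 * η ^ (-c.mu) * supOn (Set.Ici r0) (f2 - g2))

/-- `H(f1,f2) = ∫_{s0}^{r0} K(f1)(v)/v^ν dv + ∫_{r0}^{∞} K(f2)(v)/v^ν dv`. -/
def Hf (c : Cst) (s0 r0 : ℝ) (L1 N1 K1 L2 N2 K2 : (ℝ → ℝ) → ℝ → ℝ) (f1 f2 : ℝ → ℝ) : ℝ :=
  (∫ v in s0..r0, K1 f1 v / v ^ c.nu) + ∫ v in Set.Ioi r0, K2 f2 v / v ^ c.nu

/-- `E1(η; f1,f2)`. -/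
def E1f (c : Cst) (s0 r0 : ℝ) (L1 N1 K1 L2 N2 K2 : (ℝ → ℝ) → ℝ → ℝ) (f1 f2 : ℝ → ℝ)
    (η : ℝ) : ℝ :=
  Real.exp (-(∫ v in s0..η,
    (2 * c.a * v * (N1 f1 v / L1 f1 v)
      + c.D1 / Hf c s0 r0 L1 N1 K1 L2 N2 K2 f1 f2 * (K1 f1 v / (L1 f1 v * v ^ c.nu)))))

/-- `Φ1(η; f1,f2)`. -/
def Phi1f (c : Cst) (s0 r0 : ℝ) (L1 N1 K1 L2 N2 K2 : (ℝ → ℝ) → ℝ → ℝ) (f1 f2 : ℝ → ℝ)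
    (η : ℝ) : ℝ :=
  ∫ v in s0..η, E1f c s0 r0 L1 N1 K1 L2 N2 K2 f1 f2 v / (L1 f1 v * v ^ c.nu)

/-- `H1(η; f1,f2)`. -/
def H1f (c : Cst) (s0 r0 : ℝ) (L1 N1 K1 L2 N2 K2 : (ℝ → ℝ) → ℝ → ℝ) (f1 f2 : ℝ → ℝ)
    (η : ℝ) : ℝ :=
  ∫ v in s0..η, K1 f1 v / (v ^ c.nu * E1f c s0 r0 L1 N1 K1 L2 N2 K2 f1 f2 v)

/-- `G1(η; f1,f2)`. -/
def G1f (c : Cst) (s0 r0 : ℝ) (L1 N1 K1 L2 N2 K2 : (ℝ → ℝ) → ℝ → ℝ) (f1 f2 : ℝ → ℝ)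
    (η : ℝ) : ℝ :=
  ∫ v in s0..η, E1f c s0 r0 L1 N1 K1 L2 N2 K2 f1 f2 v
    * H1f c s0 r0 L1 N1 K1 L2 N2 K2 f1 f2 v / (L1 f1 v * v ^ c.nu)

/-- `V1(f1,f2)(η)`. -/
def V1f (c : Cst) (s0 r0 : ℝ) (L1 N1 K1 L2 N2 K2 : (ℝ → ℝ) → ℝ → ℝ) (f1 f2 : ℝ → ℝ)
    (η : ℝ) : ℝ :=
  s0 ^ c.nu * c.Q * Real.exp (-s0 ^ 2)
      * (Phi1f c s0 r0 L1 N1 K1 L2 N2 K2 f1 f2 r0 - Phi1f c s0 r0 L1 N1 K1 L2 N2 K2 f1 f2 η)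
    + c.D1s / Hf c s0 r0 L1 N1 K1 L2 N2 K2 f1 f2 ^ 2
      * (G1f c s0 r0 L1 N1 K1 L2 N2 K2 f1 f2 r0 - G1f c s0 r0 L1 N1 K1 L2 N2 K2 f1 f2 η)

/-- `E2(η; f1,f2)`. -/
def E2f (c : Cst) (s0 r0 : ℝ) (L1 N1 K1 L2 N2 K2 : (ℝ → ℝ) → ℝ → ℝ) (f1 f2 : ℝ → ℝ)
    (η : ℝ) : ℝ :=
  Real.exp (-(∫ v in r0..η,
    (2 * c.a * v * (N2 f2 v / L2 f2 v)
      + c.D2 / Hf c s0 r0 L1 N1 K1 L2 N2 K2 f1 f2 * (K2 f2 v / (L2 f2 v * v ^ c.nu)))))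

/-- `Φ2(η; f1,f2)`. -/
def Phi2f (c : Cst) (s0 r0 : ℝ) (L1 N1 K1 L2 N2 K2 : (ℝ → ℝ) → ℝ → ℝ) (f1 f2 : ℝ → ℝ)
    (η : ℝ) : ℝ :=
  ∫ v in r0..η, E2f c s0 r0 L1 N1 K1 L2 N2 K2 f1 f2 v / (L2 f2 v * v ^ c.nu)

/-- `Φ2(∞; f1,f2)`. -/
def Phi2I (c : Cst) (s0 r0 : ℝ) (L1 N1 K1 L2 N2 K2 : (ℝ → ℝ) → ℝ → ℝ) (f1 f2 : ℝ → ℝ) : ℝ :=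
  ∫ v in Set.Ioi r0, E2f c s0 r0 L1 N1 K1 L2 N2 K2 f1 f2 v / (L2 f2 v * v ^ c.nu)

/-- `H2(η; f1,f2)`. -/
def H2f (c : Cst) (s0 r0 : ℝ) (L1 N1 K1 L2 N2 K2 : (ℝ → ℝ) → ℝ → ℝ) (f1 f2 : ℝ → ℝ)
    (η : ℝ) : ℝ :=
  ∫ v in r0..η, K2 f2 v / (v ^ c.nu * E2f c s0 r0 L1 N1 K1 L2 N2 K2 f1 f2 v)

/-- `G2(η; f1,f2)`. -/
def G2f (c : Cst) (s0 r0 : ℝ) (L1 N1 K1 L2 N2 K2 : (ℝ → ℝ) → ℝ → ℝ) (f1 f2 : ℝ → ℝ)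
    (η : ℝ) : ℝ :=
  ∫ v in r0..η, E2f c s0 r0 L1 N1 K1 L2 N2 K2 f1 f2 v
    * H2f c s0 r0 L1 N1 K1 L2 N2 K2 f1 f2 v / (L2 f2 v * v ^ c.nu)

/-- `G2(∞; f1,f2) = lim_{η→∞} G2(η; f1,f2)`. -/
def G2I (c : Cst) (s0 r0 : ℝ) (L1 N1 K1 L2 N2 K2 : (ℝ → ℝ) → ℝ → ℝ) (f1 f2 : ℝ → ℝ) : ℝ :=
  limUnder atTop (G2f c s0 r0 L1 N1 K1 L2 N2 K2 f1 f2)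

/-- `V2(f1,f2)(η)`. -/
def V2f (c : Cst) (s0 r0 : ℝ) (L1 N1 K1 L2 N2 K2 : (ℝ → ℝ) → ℝ → ℝ) (f1 f2 : ℝ → ℝ)
    (η : ℝ) : ℝ :=
  (c.D2s / Hf c s0 r0 L1 N1 K1 L2 N2 K2 f1 f2 ^ 2 * G2I c s0 r0 L1 N1 K1 L2 N2 K2 f1 f2 - 1)
      * (Phi2f c s0 r0 L1 N1 K1 L2 N2 K2 f1 f2 η / Phi2I c s0 r0 L1 N1 K1 L2 N2 K2 f1 f2)
    - c.D2s / Hf c s0 r0 L1 N1 K1 L2 N2 K2 f1 f2 ^ 2 * G2f c s0 r0 L1 N1 K1 L2 N2 K2 f1 f2 η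

/-! Constants appearing in the estimates. -/

def Hinf (c : Cst) (s0 r0 : ℝ) : ℝ :=
  c.K1m / (c.mu + c.nu - 1) * (s0 ^ (-(c.mu + c.nu - 1)) - r0 ^ (-(c.mu + c.nu - 1)))

def Hsup (c : Cst) (s0 r0 : ℝ) : ℝ :=
  (c.K1M * s0 ^ (-(c.mu + c.nu - 1)) + c.K2M * r0 ^ (-(c.mu + c.nu - 1))) / (c.mu + c.nu - 1)

def Htil (c : Cst) (s0 r0 : ℝ) : ℝ :=
  (c.Kt1 * s0 ^ (-(c.mu + c.nu - 1)) + c.Kt2 * r0 ^ (-(c.mu + c.nu - 1))) / (c.mu + c.nu - 1)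

/-- Limit of `Hinf` as `r0 → ∞`. -/
def HinfI (c : Cst) (s0 : ℝ) : ℝ := c.K1m / (c.mu + c.nu - 1) * s0 ^ (-(c.mu + c.nu - 1))

/-- Limit of `Hsup` as `r0 → ∞`. -/
def HsupI (c : Cst) (s0 : ℝ) : ℝ := c.K1M * s0 ^ (-(c.mu + c.nu - 1)) / (c.mu + c.nu - 1)

/-- Limit of `Htil` as `r0 → ∞`. -/
def HtilI (c : Cst) (s0 : ℝ) : ℝ := c.Kt1 * s0 ^ (-(c.mu + c.nu - 1)) / (c.mu + c.nu - 1)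

/-- `E1inf` as a function of the value `h` of `Hinf`. -/
def E1infG (c : Cst) (s0 h : ℝ) : ℝ :=
  Real.exp (-(c.a * c.N1M / (c.L1m * (c.mu - 1) * s0 ^ (2 * c.mu - 2))
    + c.D1 * c.K1M / (h * c.L1m * (2 * c.mu + c.nu - 1) * s0 ^ (2 * c.mu + c.nu - 1))))

/-- `Ẽ1` as a function of the values `h` of `Hinf` and `ht` of `Htil`. -/
def E1tilG (c : Cst) (s0 h ht : ℝ) : ℝ :=
  2 * c.a * (c.Nt1 / (c.L1m * (c.mu - 2) * s0 ^ (c.mu - 2))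
      + c.N1M * c.Lt1 / (c.L1m ^ 2 * (3 * c.mu - 2) * s0 ^ (3 * c.mu - 2)))
    + c.D1 * (c.Kt1 / (h * c.L1m * (2 * c.mu + c.nu - 1) * s0 ^ (2 * c.mu + c.nu - 1))
      + c.K1M / (h * c.L1m)
        * (ht / (h * (2 * c.mu + c.nu - 1) * s0 ^ (2 * c.mu + c.nu - 1))
          + c.Lt1 / (c.L1m * (3 * c.mu + c.nu - 1) * s0 ^ (3 * c.mu + c.nu - 1))))

def Phi1tilG (c : Cst) (s0 h ht : ℝ) : ℝ :=
  E1tilG c s0 h ht / (c.L1m * (c.mu + c.nu - 1) * s0 ^ (c.mu + c.nu - 1))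
    + c.Lt1 / (c.L1m ^ 2 * (2 * c.mu + c.nu - 1) * s0 ^ (2 * c.mu + c.nu - 1))

def H1supG (c : Cst) (s0 h : ℝ) : ℝ :=
  c.K1M / (E1infG c s0 h * (c.mu + c.nu - 1) * s0 ^ (c.mu + c.nu - 1))

def H1tilG (c : Cst) (s0 h ht : ℝ) : ℝ :=
  (c.Kt1 + c.K1M * E1tilG c s0 h ht / E1infG c s0 h)
    / (E1infG c s0 h * (c.mu + c.nu - 1) * s0 ^ (c.mu + c.nu - 1))

def G1supG (c : Cst) (s0 h : ℝ) : ℝ :=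
  H1supG c s0 h / (c.L1m * (c.mu + c.nu - 1) * s0 ^ (c.mu + c.nu - 1))

def G1tilG (c : Cst) (s0 h ht : ℝ) : ℝ :=
  H1supG c s0 h * Phi1tilG c s0 h ht
    + H1tilG c s0 h ht / (c.L1m * (c.mu + c.nu - 1) * s0 ^ (c.mu + c.nu - 1))

/-- `ε1` as a function of the values `h` of `Hinf`, `hs` of `Hsup`, `ht` of `Htil`. -/
def eps1G (c : Cst) (s0 h hs ht : ℝ) : ℝ :=
  2 * s0 ^ c.nu * c.Q * Real.exp (-s0 ^ 2) * Phi1tilG c s0 h ht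
    + 2 * c.D1s * (2 * G1supG c s0 h * hs * ht / h ^ 4 + G1tilG c s0 h ht / h ^ 2)

def E1inf (c : Cst) (s0 r0 : ℝ) : ℝ := E1infG c s0 (Hinf c s0 r0)
def E1til (c : Cst) (s0 r0 : ℝ) : ℝ := E1tilG c s0 (Hinf c s0 r0) (Htil c s0 r0)
def Phi1til (c : Cst) (s0 r0 : ℝ) : ℝ := Phi1tilG c s0 (Hinf c s0 r0) (Htil c s0 r0)
def H1sup (c : Cst) (s0 r0 : ℝ) : ℝ := H1supG c s0 (Hinf c s0 r0)
def H1til (c : Cst) (s0 r0 : ℝ) : ℝ := H1tilG c s0 (Hinf c s0 r0) (Htil c s0 r0)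
def G1sup (c : Cst) (s0 r0 : ℝ) : ℝ := G1supG c s0 (Hinf c s0 r0)
def G1til (c : Cst) (s0 r0 : ℝ) : ℝ := G1tilG c s0 (Hinf c s0 r0) (Htil c s0 r0)
def eps1 (c : Cst) (s0 r0 : ℝ) : ℝ := eps1G c s0 (Hinf c s0 r0) (Hsup c s0 r0) (Htil c s0 r0)

/-- `j1(s0) = lim_{r0→∞} ε1(r0,s0)`: the same expression with `Hinf, Hsup, Htil`
replaced by their limits as `r0 → ∞`. -/
def j1 (c : Cst) (s0 : ℝ) : ℝ := eps1G c s0 (HinfI c s0) (HsupI c s0) (HtilI c s0)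

def E2inf (c : Cst) (s0 r0 : ℝ) : ℝ :=
  Real.exp (-(c.a * c.N2M / (c.L2m * (c.mu - 1) * r0 ^ (2 * c.mu - 2))
    + c.D2 * c.K2M / (Hinf c s0 r0 * c.L2m * (2 * c.mu + c.nu - 1) * r0 ^ (2 * c.mu + c.nu - 1))))

def E2til (c : Cst) (s0 r0 : ℝ) : ℝ :=
  2 * c.a * (c.Nt2 / (c.L2m * (c.mu - 2) * r0 ^ (c.mu - 2))
      + c.N2M * c.Lt2 / (c.L2m ^ 2 * (3 * c.mu - 2) * r0 ^ (3 * c.mu - 2)))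
    + c.D2 * (c.Kt2 / (Hinf c s0 r0 * c.L2m * (2 * c.mu + c.nu - 1) * r0 ^ (2 * c.mu + c.nu - 1))
      + c.K2M / (Hinf c s0 r0 * c.L2m)
        * (Htil c s0 r0 / (Hinf c s0 r0 * (2 * c.mu + c.nu - 1) * r0 ^ (2 * c.mu + c.nu - 1))
          + c.Lt2 / (c.L2m * (3 * c.mu + c.nu - 1) * r0 ^ (3 * c.mu + c.nu - 1))))

def Phi2til (c : Cst) (s0 r0 : ℝ) : ℝ :=
  E2til c s0 r0 / (c.L2m * (c.mu + c.nu - 1) * r0 ^ (c.mu + c.nu - 1))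
    + c.Lt2 / (c.L2m ^ 2 * (2 * c.mu + c.nu - 1) * r0 ^ (2 * c.mu + c.nu - 1))

/-- `Φ2inf(∞)(r0,s0)`. -/
def Phi2infC (c : Cst) (s0 r0 : ℝ) : ℝ :=
  E2inf c s0 r0 / (c.L2M * (c.mu + c.nu - 1) * r0 ^ (c.mu + c.nu - 1))

/-- `Φ2sup(r0)`. -/
def Phi2supC (c : Cst) (r0 : ℝ) : ℝ := 1 / (c.L2m * (c.mu + c.nu - 1) * r0 ^ (c.mu + c.nu - 1))

def H2sup (c : Cst) (s0 r0 : ℝ) : ℝ :=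
  c.K2M / (E2inf c s0 r0 * (c.mu + c.nu - 1) * r0 ^ (c.mu + c.nu - 1))

def H2til (c : Cst) (s0 r0 : ℝ) : ℝ :=
  (c.Kt2 + c.K2M * E2til c s0 r0 / E2inf c s0 r0)
    / (E2inf c s0 r0 * (c.mu + c.nu - 1) * r0 ^ (c.mu + c.nu - 1))

def G2sup (c : Cst) (s0 r0 : ℝ) : ℝ :=
  H2sup c s0 r0 / (c.L2m * (c.mu + c.nu - 1) * r0 ^ (c.mu + c.nu - 1))

def G2til (c : Cst) (s0 r0 : ℝ) : ℝ :=
  H2sup c s0 r0 * Phi2til c s0 r0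
    + H2til c s0 r0 / (c.L2m * (c.mu + c.nu - 1) * r0 ^ (c.mu + c.nu - 1))

def eps21 (c : Cst) (s0 r0 : ℝ) : ℝ := 2 * Phi2til c s0 r0 / Phi2infC c s0 r0

def eps22 (c : Cst) (s0 r0 : ℝ) : ℝ :=
  G2til c s0 r0 / Hinf c s0 r0 ^ 2
    + 2 * G2sup c s0 r0 * Hsup c s0 r0 * Htil c s0 r0 / Hinf c s0 r0 ^ 4

def eps23 (c : Cst) (s0 r0 : ℝ) : ℝ :=
  Phi2supC c r0 / Phi2infC c s0 r0 * eps22 c s0 r0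
    + G2sup c s0 r0 / Hinf c s0 r0 ^ 2 * eps21 c s0 r0

def eps2 (c : Cst) (s0 r0 : ℝ) : ℝ := eps21 c s0 r0 + eps22 c s0 r0 + eps23 c s0 r0



/-! ### Auxiliary lemmas -/

section Aux
open MeasureTheory intervalIntegral

lemma exp_neg_lip {x y : ℝ} (hx : 0 ≤ x) (hy : 0 ≤ y) :
    |Real.exp (-x) - Real.exp (-y)| ≤ |x - y| := by
  wlog h : y ≤ x generalizing x y
  · rw [abs_sub_comm, abs_sub_comm x y]; exact this hy hx (le_of_not_ge h)
  have hm : Real.exp (-x) ≤ Real.exp (-y) := Real.exp_le_exp.mpr (by linarith)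
  rw [abs_sub_comm, abs_of_nonneg (by linarith), abs_of_nonneg (by linarith)]
  have h1 : Real.exp (-x) = Real.exp (-y) * Real.exp (-(x - y)) := by
    rw [← Real.exp_add]; ring_nf
  have h2 : Real.exp (-y) ≤ 1 := Real.exp_le_one_iff.mpr (by linarith)
  nlinarith [Real.add_one_le_exp (-(x - y)), Real.exp_pos (-(x-y)), Real.exp_pos (-y)]

lemma int_rpow_eq {p s0 η : ℝ} (hp : 1 < p) (hs : 0 < s0) (hη : s0 ≤ η) :
    ∫ v in s0..η, v ^ (-p) = (s0 ^ (-(p-1)) - η ^ (-(p-1))) / (p - 1) := by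
  have h0 : (0:ℝ) ∉ Set.uIcc s0 η := by
    rw [Set.uIcc_of_le hη]; intro h; exact absurd (Set.mem_Icc.mp h).1 (not_le.mpr hs)
  rw [integral_rpow (Or.inr ⟨by intro h; rw [neg_eq_iff_eq_neg] at h; linarith, h0⟩)]
  rw [show -p + 1 = -(p-1) by ring, div_neg]
  ring

lemma int_rpow_le {p s0 η : ℝ} (hp : 1 < p) (hs : 0 < s0) (hη : s0 ≤ η) :
    ∫ v in s0..η, v ^ (-p) ≤ s0 ^ (-(p-1)) / (p - 1) := by
  rw [int_rpow_eq hp hs hη]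
  have h2 : 0 ≤ η ^ (-(p - 1)) := Real.rpow_nonneg (lt_of_lt_of_le hs hη).le _
  gcongr
  · linarith

lemma div_sub_div_bound {af ag bf bg : ℝ} (hbf : 0 < bf) (hbg : 0 < bg) :
    |af/bf - ag/bg| ≤ |af - ag|/bf + |ag| * |bf - bg| / (bf*bg) := by
  have h : af/bf - ag/bg = (af-ag)/bf + ag*(bg-bf)/(bf*bg) := by
    field_simp; ring
  rw [h]
  refine (abs_add_le _ _).trans (le_of_eq ?_)
  rw [abs_div, abs_div, abs_of_pos hbf, abs_mul, abs_of_pos (mul_pos hbf hbg),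
    abs_sub_comm bg bf]

lemma abs_intervalIntegral_sub_le {F G B : ℝ → ℝ} {a b : ℝ} (hab : a ≤ b)
    (hF : IntervalIntegrable F volume a b) (hG : IntervalIntegrable G volume a b)
    (hB : IntervalIntegrable B volume a b)
    (hbd : ∀ x ∈ Set.Icc a b, |F x - G x| ≤ B x) :
    |(∫ v in a..b, F v) - ∫ v in a..b, G v| ≤ ∫ v in a..b, B v := by
  rw [← intervalIntegral.integral_sub hF hG]
  refine (intervalIntegral.abs_integral_le_integral_abs hab).trans ?_
  exact intervalIntegral.integral_mono_on hab (hF.sub hG).abs hB hbd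

lemma abs_setIntegral_sub_le {F G B : ℝ → ℝ} {s : Set ℝ} (hs : MeasurableSet s)
    (hF : IntegrableOn F s) (hG : IntegrableOn G s) (hB : IntegrableOn B s)
    (hbd : ∀ x ∈ s, |F x - G x| ≤ B x) :
    |(∫ v in s, F v) - ∫ v in s, G v| ≤ ∫ v in s, B v := by
  rw [← MeasureTheory.integral_sub hF hG]
  refine le_trans (by simpa [Real.norm_eq_abs] using
    MeasureTheory.norm_integral_le_integral_norm (μ := volume.restrict s) (fun v => F v - G v)) ?_
  exact setIntegral_mono_on (hF.sub hG).abs hB hs hbd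

lemma ii_cr {p a t C : ℝ} (ha : 0 < a) (hat : a ≤ t) :
    IntervalIntegrable (fun v : ℝ => C * v ^ (-p)) volume a t := by
  apply ContinuousOn.intervalIntegrable
  apply continuousOn_const.mul
  apply ContinuousOn.rpow_const continuousOn_id
  intro x hx
  rw [Set.uIcc_of_le hat] at hx
  exact Or.inl (ne_of_gt (lt_of_lt_of_le ha hx.1))

lemma int_cr_le {p a t C : ℝ} (hp : 1 < p) (ha : 0 < a) (hat : a ≤ t) (hC : 0 ≤ C) :
    ∫ v in a..t, C * v ^ (-p) ≤ C * a ^ (-(p-1)) / (p - 1) := by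
  rw [intervalIntegral.integral_const_mul]
  calc C * ∫ v in a..t, v ^ (-p) ≤ C * (a ^ (-(p-1)) / (p-1)) :=
        mul_le_mul_of_nonneg_left (int_rpow_le hp ha hat) hC
    _ = C * a ^ (-(p-1)) / (p - 1) := by ring

end Aux

set_option maxHeartbeats 2000000 in
theorem stmt5 (c : Cst) (s0 r0 : ℝ) (L1 N1 K1 L2 N2 K2 : (ℝ → ℝ) → ℝ → ℝ)
    (hpos : PosC c s0 r0) (hA : Assum c s0 r0 L1 N1 K1 L2 N2 K2)
    (f1 f2 : ℝ → ℝ) (hf1 : f1 ∈ C1 s0 r0) (hf2 : f2 ∈ Mset r0)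
    (g1 g2 : ℝ → ℝ) (hg1 : g1 ∈ C1 s0 r0) (hg2 : g2 ∈ Mset r0) :
    ∀ η ∈ Set.Icc s0 r0,
      |Phi1f c s0 r0 L1 N1 K1 L2 N2 K2 f1 f2 η - Phi1f c s0 r0 L1 N1 K1 L2 N2 K2 g1 g2 η| ≤ Phi1til c s0 r0 * pairNorm s0 r0 f1 f2 g1 g2 := by
  intro η hη
  obtain ⟨ha, hnu, hnu1, hmu, hs0, hsr, hD1, -, -, -, -, hL1m, hL1M, hN1m, hN1M, hK1m, hK1M,
    hL2m, hL2M, hN2m, hN2M, hK2m, hK2M, hLt1, hNt1, hKt1, hLt2, hNt2, hKt2⟩ := hpos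
  obtain ⟨hAc1, hAc2, hA1, hA2, hA3, hA4⟩ := hA
  obtain ⟨hη1, hη2⟩ := hη
  have hsr' : s0 ≤ r0 := hsr.le
  have hr0 : 0 < r0 := hs0.trans hsr
  have hf1' : ContinuousOn f1 (Set.Icc s0 r0) := hf1
  have hg1' : ContinuousOn g1 (Set.Icc s0 r0) := hg1
  -- norms
  set n1 := supOn (Set.Icc s0 r0) (f1 - g1) with hn1def
  set n2 := supOn (Set.Ici r0) (f2 - g2) with hn2def
  set P := pairNorm s0 r0 f1 f2 g1 g2 with hPdef
  have hn1P : n1 ≤ P := le_max_left _ _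
  have hn2P : n2 ≤ P := le_max_right _ _
  have hn1nonneg : 0 ≤ n1 := by
    obtain ⟨Cb, hCb⟩ := isCompact_Icc.exists_bound_of_continuousOn (hf1'.sub hg1')
    have hbdd : BddAbove (Set.range fun x : Set.Icc s0 r0 => |(f1 - g1) x.1|) := by
      refine ⟨Cb, ?_⟩
      rintro y ⟨x, rfl⟩
      simpa [Real.norm_eq_abs] using hCb x.1 x.2
    refine le_trans (abs_nonneg ((f1 - g1) s0)) ?_
    exact le_ciSup hbdd ⟨s0, Set.left_mem_Icc.mpr hsr'⟩
  have hP0 : 0 ≤ P := le_trans hn1nonneg hn1P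
  -- basic pointwise positivity
  have hvpos : ∀ v ∈ Set.Icc s0 r0, (0:ℝ) < v := fun v hv => lt_of_lt_of_le hs0 hv.1
  have hpow : ∀ q : ℝ, ContinuousOn (fun v : ℝ => v ^ q) (Set.Icc s0 r0) := fun q =>
    continuousOn_id.rpow_const fun x hx => Or.inl (ne_of_gt (lt_of_lt_of_le hs0 hx.1))
  have hLf := fun (v : ℝ) (hv : v ∈ Set.Icc s0 r0) => hA1 f1 hf1 v hv
  have hLg := fun (v : ℝ) (hv : v ∈ Set.Icc s0 r0) => hA1 g1 hg1 v hv
  have hLfpos : ∀ v ∈ Set.Icc s0 r0, 0 < L1 f1 v := fun v hv =>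
    lt_of_lt_of_le (mul_pos hL1m (Real.rpow_pos_of_pos (hvpos v hv) _)) (hLf v hv).1
  have hLgpos : ∀ v ∈ Set.Icc s0 r0, 0 < L1 g1 v := fun v hv =>
    lt_of_lt_of_le (mul_pos hL1m (Real.rpow_pos_of_pos (hvpos v hv) _)) (hLg v hv).1
  have hNfpos : ∀ v ∈ Set.Icc s0 r0, 0 < N1 f1 v := fun v hv =>
    lt_of_lt_of_le (mul_pos hN1m (Real.rpow_pos_of_pos (hvpos v hv) _)) (hLf v hv).2.2.1
  have hNgpos : ∀ v ∈ Set.Icc s0 r0, 0 < N1 g1 v := fun v hv =>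
    lt_of_lt_of_le (mul_pos hN1m (Real.rpow_pos_of_pos (hvpos v hv) _)) (hLg v hv).2.2.1
  have hKfpos : ∀ v ∈ Set.Icc s0 r0, 0 < K1 f1 v := fun v hv =>
    lt_of_lt_of_le (mul_pos hK1m (Real.rpow_pos_of_pos (hvpos v hv) _)) (hLf v hv).2.2.2.2.1
  have hKgpos : ∀ v ∈ Set.Icc s0 r0, 0 < K1 g1 v := fun v hv =>
    lt_of_lt_of_le (mul_pos hK1m (Real.rpow_pos_of_pos (hvpos v hv) _)) (hLg v hv).2.2.2.2.1
  have hq1 : (1:ℝ) < c.mu + c.nu := by linarith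
  -- integrability over Ioi r0
  have hIoiK : ∀ f' : ℝ → ℝ, f' ∈ Mset r0 →
      IntegrableOn (fun v => K2 f' v / v ^ c.nu) (Set.Ioi r0) := by
    intro f' hf'
    have hcont : ContinuousOn (fun v => K2 f' v / v ^ c.nu) (Set.Ioi r0) := by
      apply ContinuousOn.div ((hAc2 f' hf').2.2.mono Set.Ioi_subset_Ici_self)
      · exact continuousOn_id.rpow_const fun x hx =>
          Or.inl (ne_of_gt (hr0.trans (Set.mem_Ioi.mp hx)))
      · exact fun x hx => ne_of_gt (Real.rpow_pos_of_pos (hr0.trans (Set.mem_Ioi.mp hx)) _)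
    have hdom : IntegrableOn (fun v : ℝ => c.K2M * v ^ (-(c.mu + c.nu))) (Set.Ioi r0) :=
      (integrableOn_Ioi_rpow_of_lt (by linarith) hr0).const_mul _
    refine Integrable.mono' hdom (hcont.aestronglyMeasurable measurableSet_Ioi) ?_
    rw [ae_restrict_iff' measurableSet_Ioi]
    refine Filter.Eventually.of_forall fun v hv => ?_
    have hv0 : 0 < v := hr0.trans (Set.mem_Ioi.mp hv)
    have hb := hA2 f' hf' v (Set.mem_Ici.mpr (Set.mem_Ioi.mp hv).le)
    have hKpos : 0 < K2 f' v :=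
      lt_of_lt_of_le (mul_pos hK2m (Real.rpow_pos_of_pos hv0 _)) hb.2.2.2.2.1
    rw [Real.norm_eq_abs, abs_of_pos (div_pos hKpos (Real.rpow_pos_of_pos hv0 _)),
      show -(c.mu + c.nu) = -c.mu - c.nu by ring, Real.rpow_sub hv0, ← mul_div_assoc]
    gcongr
    all_goals first
      | exact hb.2.2.2.2.2
      | exact (Real.rpow_pos_of_pos hv0 c.nu).le
  -- continuity and integrability of K1 ⬝ / v^ν on [s0, r0]
  have hKdivc : ∀ f' : ℝ → ℝ, f' ∈ C1 s0 r0 →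
      ContinuousOn (fun v => K1 f' v / v ^ c.nu) (Set.Icc s0 r0) := by
    intro f' hf'
    exact ContinuousOn.div (hAc1 f' hf').2.2 (hpow c.nu)
      fun v hv => ne_of_gt (Real.rpow_pos_of_pos (hvpos v hv) _)
  have hKdivint : ∀ f' : ℝ → ℝ, f' ∈ C1 s0 r0 →
      IntervalIntegrable (fun v => K1 f' v / v ^ c.nu) MeasureTheory.volume s0 r0 := by
    intro f' hf'
    exact ((hKdivc f' hf').mono (by rw [Set.uIcc_of_le hsr'])).intervalIntegrable
  -- lower bound on Hf
  have hHlow : ∀ f1' ∈ C1 s0 r0, ∀ f2' ∈ Mset r0,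
      Hinf c s0 r0 ≤ Hf c s0 r0 L1 N1 K1 L2 N2 K2 f1' f2' := by
    intro f1' hf1' f2' hf2'
    have hmono : ∫ v in s0..r0, c.K1m * v ^ (-(c.mu + c.nu)) ≤
        ∫ v in s0..r0, K1 f1' v / v ^ c.nu := by
      refine intervalIntegral.integral_mono_on hsr' (ii_cr hs0 hsr') (hKdivint f1' hf1') ?_
      intro v hv
      have hv0 := hvpos v hv
      have hb := hA1 f1' hf1' v hv
      rw [show -(c.mu + c.nu) = -c.mu - c.nu by ring, Real.rpow_sub hv0, ← mul_div_assoc]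
      gcongr
      exact hb.2.2.2.2.1
    have hval : ∫ v in s0..r0, c.K1m * v ^ (-(c.mu + c.nu)) = Hinf c s0 r0 := by
      rw [intervalIntegral.integral_const_mul, int_rpow_eq hq1 hs0 hsr', Hinf]
      ring
    have h2 : 0 ≤ ∫ v in Set.Ioi r0, K2 f2' v / v ^ c.nu := by
      refine MeasureTheory.setIntegral_nonneg measurableSet_Ioi fun v hv => ?_
      have hv0 : 0 < v := hr0.trans (Set.mem_Ioi.mp hv)
      have hb := hA2 f2' hf2' v (Set.mem_Ici.mpr (Set.mem_Ioi.mp hv).le)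
      have hKpos : 0 < K2 f2' v :=
        lt_of_lt_of_le (mul_pos hK2m (Real.rpow_pos_of_pos hv0 _)) hb.2.2.2.2.1
      positivity
    rw [Hf]
    calc Hinf c s0 r0 ≤ ∫ v in s0..r0, K1 f1' v / v ^ c.nu := hval ▸ hmono
      _ ≤ _ := le_add_of_nonneg_right h2
  have hrp : r0 ^ (-(c.mu + c.nu - 1)) < s0 ^ (-(c.mu + c.nu - 1)) :=
    Real.rpow_lt_rpow_of_neg hs0 hsr (by linarith)
  have hHinfpos : 0 < Hinf c s0 r0 := by
    rw [Hinf]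
    exact mul_pos (div_pos hK1m (by linarith)) (by linarith)
  have hHtilpos : 0 < Htil c s0 r0 := by
    rw [Htil]
    refine div_pos (add_pos (mul_pos hKt1 (Real.rpow_pos_of_pos hs0 _))
      (mul_pos hKt2 (Real.rpow_pos_of_pos hr0 _))) (by linarith)
  set HFv := Hf c s0 r0 L1 N1 K1 L2 N2 K2 f1 f2 with hHFdef
  set HGv := Hf c s0 r0 L1 N1 K1 L2 N2 K2 g1 g2 with hHGdef
  set h := Hinf c s0 r0 with hhdef
  set ht := Htil c s0 r0 with hhtdef
  have hhpos : 0 < h := hHinfpos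
  have htpos : 0 < ht := hHtilpos
  have hHF : h ≤ HFv := hHlow f1 hf1 f2 hf2
  have hHG : h ≤ HGv := hHlow g1 hg1 g2 hg2
  have hHFpos : 0 < HFv := hhpos.trans_le hHF
  have hHGpos : 0 < HGv := hhpos.trans_le hHG
  -- difference of H
  have hdH : |HFv - HGv| ≤ ht * P := by
    rw [hHFdef, hHGdef, Hf, Hf]
    have h1 : |(∫ v in s0..r0, K1 f1 v / v ^ c.nu) - ∫ v in s0..r0, K1 g1 v / v ^ c.nu|
        ≤ c.Kt1 * n1 * s0 ^ (-(c.mu + c.nu - 1)) / (c.mu + c.nu - 1) := by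
      refine (abs_intervalIntegral_sub_le hsr' (hKdivint f1 hf1) (hKdivint g1 hg1)
        (ii_cr (C := c.Kt1 * n1) hs0 hsr') ?_).trans
        (int_cr_le hq1 hs0 hsr' (by positivity))
      intro v hv
      have hv0 := hvpos v hv
      have hd := (hA3 f1 hf1 g1 hg1 v hv).2.2
      rw [div_sub_div_same, abs_div, abs_of_pos (Real.rpow_pos_of_pos hv0 c.nu),
        show -(c.mu + c.nu) = -c.mu - c.nu by ring, Real.rpow_sub hv0, ← mul_div_assoc]
      gcongr
      exact hd.trans (le_of_eq (by ring))
    have h2 : |(∫ v in Set.Ioi r0, K2 f2 v / v ^ c.nu) - ∫ v in Set.Ioi r0, K2 g2 v / v ^ c.nu|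
        ≤ c.Kt2 * n2 * r0 ^ (-(c.mu + c.nu - 1)) / (c.mu + c.nu - 1) := by
      have hBint : IntegrableOn (fun v : ℝ => c.Kt2 * n2 * v ^ (-(c.mu + c.nu))) (Set.Ioi r0) :=
        (integrableOn_Ioi_rpow_of_lt (by linarith) hr0).const_mul _
      refine (abs_setIntegral_sub_le measurableSet_Ioi (hIoiK f2 hf2) (hIoiK g2 hg2) hBint ?_).trans ?_
      · intro v hv
        have hv0 : 0 < v := hr0.trans (Set.mem_Ioi.mp hv)
        have hd := (hA4 f2 hf2 g2 hg2 v (Set.mem_Ici.mpr (Set.mem_Ioi.mp hv).le)).2.2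
        rw [div_sub_div_same, abs_div, abs_of_pos (Real.rpow_pos_of_pos hv0 c.nu),
          show -(c.mu + c.nu) = -c.mu - c.nu by ring, Real.rpow_sub hv0, ← mul_div_assoc]
        gcongr
        exact hd.trans (le_of_eq (by ring))
      · rw [MeasureTheory.integral_const_mul, integral_Ioi_rpow_of_lt (by linarith) hr0,
          show -(c.mu + c.nu) + 1 = -(c.mu + c.nu - 1) by ring, neg_div_neg_eq]
        exact le_of_eq (by ring)
    calc |(∫ v in s0..r0, K1 f1 v / v ^ c.nu) + (∫ v in Set.Ioi r0, K2 f2 v / v ^ c.nu)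
          - ((∫ v in s0..r0, K1 g1 v / v ^ c.nu) + ∫ v in Set.Ioi r0, K2 g2 v / v ^ c.nu)|
        ≤ |(∫ v in s0..r0, K1 f1 v / v ^ c.nu) - ∫ v in s0..r0, K1 g1 v / v ^ c.nu|
          + |(∫ v in Set.Ioi r0, K2 f2 v / v ^ c.nu) - ∫ v in Set.Ioi r0, K2 g2 v / v ^ c.nu| := by
          refine le_trans (le_of_eq ?_) (abs_add_le _ _)
          congr 1
          ring
      _ ≤ c.Kt1 * n1 * s0 ^ (-(c.mu + c.nu - 1)) / (c.mu + c.nu - 1)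
          + c.Kt2 * n2 * r0 ^ (-(c.mu + c.nu - 1)) / (c.mu + c.nu - 1) := add_le_add h1 h2
      _ ≤ c.Kt1 * P * s0 ^ (-(c.mu + c.nu - 1)) / (c.mu + c.nu - 1)
          + c.Kt2 * P * r0 ^ (-(c.mu + c.nu - 1)) / (c.mu + c.nu - 1) := by
          have hs0e : (0:ℝ) < s0 ^ (-(c.mu + c.nu - 1)) := Real.rpow_pos_of_pos hs0 _
          have hr0e : (0:ℝ) < r0 ^ (-(c.mu + c.nu - 1)) := Real.rpow_pos_of_pos hr0 _
          have hq0 : (0:ℝ) < c.mu + c.nu - 1 := by linarith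
          gcongr
      _ = ht * P := by rw [hhtdef, Htil]; ring
  -- the W functions (integrands of E1)
  set Wf : ℝ → ℝ := fun v => 2 * c.a * v * (N1 f1 v / L1 f1 v)
      + c.D1 / HFv * (K1 f1 v / (L1 f1 v * v ^ c.nu)) with hWfdef
  set Wg : ℝ → ℝ := fun v => 2 * c.a * v * (N1 g1 v / L1 g1 v)
      + c.D1 / HGv * (K1 g1 v / (L1 g1 v * v ^ c.nu)) with hWgdef
  have hEf : ∀ t : ℝ, E1f c s0 r0 L1 N1 K1 L2 N2 K2 f1 f2 t
      = Real.exp (-(∫ v in s0..t, Wf v)) := by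
    intro t; simp only [E1f, hWfdef, hHFdef]
  have hEg : ∀ t : ℝ, E1f c s0 r0 L1 N1 K1 L2 N2 K2 g1 g2 t
      = Real.exp (-(∫ v in s0..t, Wg v)) := by
    intro t; simp only [E1f, hWgdef, hHGdef]
  have hWfc : ContinuousOn Wf (Set.Icc s0 r0) := by
    rw [hWfdef]
    apply ContinuousOn.add
    · exact (continuous_const.mul continuous_id).continuousOn.mul
        (((hAc1 f1 hf1).2.1).div (hAc1 f1 hf1).1 fun v hv => (hLfpos v hv).ne')
    · refine continuousOn_const.mul (ContinuousOn.div (hAc1 f1 hf1).2.2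
        ((hAc1 f1 hf1).1.mul (hpow c.nu)) fun v hv => ?_)
      exact (mul_pos (hLfpos v hv) (Real.rpow_pos_of_pos (hvpos v hv) _)).ne'
  have hWgc : ContinuousOn Wg (Set.Icc s0 r0) := by
    rw [hWgdef]
    apply ContinuousOn.add
    · exact (continuous_const.mul continuous_id).continuousOn.mul
        (((hAc1 g1 hg1).2.1).div (hAc1 g1 hg1).1 fun v hv => (hLgpos v hv).ne')
    · refine continuousOn_const.mul (ContinuousOn.div (hAc1 g1 hg1).2.2
        ((hAc1 g1 hg1).1.mul (hpow c.nu)) fun v hv => ?_)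
      exact (mul_pos (hLgpos v hv) (Real.rpow_pos_of_pos (hvpos v hv) _)).ne'
  have hWf0 : ∀ v ∈ Set.Icc s0 r0, 0 ≤ Wf v := by
    intro v hv
    have hv0 := hvpos v hv
    have h1 := hNfpos v hv
    have h2 := hKfpos v hv
    have h3 := hLfpos v hv
    have h5 := hHFpos
    show (0:ℝ) ≤ 2 * c.a * v * (N1 f1 v / L1 f1 v)
      + c.D1 / HFv * (K1 f1 v / (L1 f1 v * v ^ c.nu))
    positivity
  have hWg0 : ∀ v ∈ Set.Icc s0 r0, 0 ≤ Wg v := by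
    intro v hv
    have hv0 := hvpos v hv
    have h1 := hNgpos v hv
    have h2 := hKgpos v hv
    have h3 := hLgpos v hv
    have h5 := hHGpos
    show (0:ℝ) ≤ 2 * c.a * v * (N1 g1 v / L1 g1 v)
      + c.D1 / HGv * (K1 g1 v / (L1 g1 v * v ^ c.nu))
    positivity
  have hIf0 : ∀ t ∈ Set.Icc s0 r0, 0 ≤ ∫ v in s0..t, Wf v := fun t htm =>
    intervalIntegral.integral_nonneg htm.1 fun u hu => hWf0 u ⟨hu.1, hu.2.trans htm.2⟩
  have hIg0 : ∀ t ∈ Set.Icc s0 r0, 0 ≤ ∫ v in s0..t, Wg v := fun t htm =>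
    intervalIntegral.integral_nonneg htm.1 fun u hu => hWg0 u ⟨hu.1, hu.2.trans htm.2⟩
  -- the comparison function b
  set Ca := 2 * c.a * c.Nt1 / c.L1m with hCadef
  set Cb := 2 * c.a * c.N1M * c.Lt1 / c.L1m ^ 2 with hCbdef
  set Cc := c.D1 * c.Kt1 / (h * c.L1m) + c.D1 * c.K1M * ht / (h ^ 2 * c.L1m) with hCcdef
  set Cd := c.D1 * c.K1M * c.Lt1 / (h * c.L1m ^ 2) with hCddef
  set b : ℝ → ℝ := fun v => Ca * v ^ (-(c.mu - 1)) + Cb * v ^ (-(3 * c.mu - 1))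
      + Cc * v ^ (-(2 * c.mu + c.nu)) + Cd * v ^ (-(3 * c.mu + c.nu)) with hbdef
  have hCa0 : 0 ≤ Ca := by rw [hCadef]; positivity
  have hCb0 : 0 ≤ Cb := by rw [hCbdef]; positivity
  have hCc0 : 0 ≤ Cc := by rw [hCcdef]; positivity
  have hCd0 : 0 ≤ Cd := by rw [hCddef]; positivity
  -- pointwise bound on |Wf - Wg|
  have hWdiff : ∀ v ∈ Set.Icc s0 r0, |Wf v - Wg v| ≤ P * b v := by
    intro v hv
    have hv0 := hvpos v hv
    have hbf := hLf v hv
    have hbg := hLg v hv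
    have hd := hA3 f1 hf1 g1 hg1 v hv
    have hLfp := hLfpos v hv
    have hLgp := hLgpos v hv
    have hNgp := hNgpos v hv
    have hKgp := hKgpos v hv
    have hnu0 : (0:ℝ) < v ^ c.nu := Real.rpow_pos_of_pos hv0 _
    have hmu0 : (0:ℝ) < v ^ c.mu := Real.rpow_pos_of_pos hv0 _
    have hmun0 : (0:ℝ) < v ^ (-c.mu) := Real.rpow_pos_of_pos hv0 _
    have hdL : |L1 f1 v - L1 g1 v| ≤ c.Lt1 * P :=
      hd.1.trans (mul_le_mul_of_nonneg_left hn1P hLt1.le)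
    have hdN : |N1 f1 v - N1 g1 v| ≤ c.Nt1 * P :=
      hd.2.1.trans (mul_le_mul_of_nonneg_left hn1P hNt1.le)
    have hdK : |K1 f1 v - K1 g1 v| ≤ c.Kt1 * v ^ (-c.mu) * P :=
      hd.2.2.trans (mul_le_mul_of_nonneg_left hn1P (by positivity))
    have hNg_le : |N1 g1 v| ≤ c.N1M * v ^ (-c.mu) := by
      rw [abs_of_pos hNgp]; exact hbg.2.2.2.1
    have hKg_le : |K1 g1 v| ≤ c.K1M * v ^ (-c.mu) := by
      rw [abs_of_pos hKgp]; exact hbg.2.2.2.2.2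
    have part1 : |N1 f1 v / L1 f1 v - N1 g1 v / L1 g1 v| ≤
        c.Nt1 * P / (c.L1m * v ^ c.mu) + (c.N1M * v ^ (-c.mu)) * (c.Lt1 * P)
          / ((c.L1m * v ^ c.mu) * (c.L1m * v ^ c.mu)) := by
      refine (div_sub_div_bound hLfp hLgp).trans ?_
      have e1 : |N1 f1 v - N1 g1 v| / L1 f1 v ≤ c.Nt1 * P / (c.L1m * v ^ c.mu) := by
        gcongr
        all_goals first
          | exact hdN
          | exact hbf.1
          | exact mul_pos hL1m hmu0
      have e2 : |N1 g1 v| * |L1 f1 v - L1 g1 v| / (L1 f1 v * L1 g1 v)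
          ≤ (c.N1M * v ^ (-c.mu)) * (c.Lt1 * P) / ((c.L1m * v ^ c.mu) * (c.L1m * v ^ c.mu)) := by
        gcongr
        all_goals first
          | exact hNg_le
          | exact hdL
          | exact hbf.1
          | exact hbg.1
          | exact mul_pos (mul_pos hL1m hmu0) (mul_pos hL1m hmu0)
      exact add_le_add e1 e2
    have idK : c.D1 / HFv * (K1 f1 v / (L1 f1 v * v ^ c.nu))
          - c.D1 / HGv * (K1 g1 v / (L1 g1 v * v ^ c.nu))
        = c.D1 * (((K1 f1 v - K1 g1 v) / (HFv * L1 f1 v)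
            + K1 g1 v * (HGv - HFv) / (HFv * HGv * L1 f1 v)
            + K1 g1 v * (L1 g1 v - L1 f1 v) / (HGv * L1 f1 v * L1 g1 v)) / v ^ c.nu) := by
      field_simp
      ring
    have e1 : |(K1 f1 v - K1 g1 v) / (HFv * L1 f1 v)|
        ≤ c.Kt1 * v ^ (-c.mu) * P / (h * (c.L1m * v ^ c.mu)) := by
      rw [abs_div, abs_of_pos (mul_pos hHFpos hLfp)]
      gcongr
      all_goals first
        | exact hdK
        | exact hHF
        | exact hbf.1
        | exact mul_pos hhpos (mul_pos hL1m hmu0)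
    have e2 : |K1 g1 v * (HGv - HFv) / (HFv * HGv * L1 f1 v)|
        ≤ c.K1M * v ^ (-c.mu) * (ht * P) / (h * h * (c.L1m * v ^ c.mu)) := by
      rw [abs_div, abs_mul, abs_of_pos (mul_pos (mul_pos hHFpos hHGpos) hLfp)]
      gcongr
      all_goals first
        | exact hKg_le
        | (rw [abs_sub_comm]; exact hdH)
        | exact hHF
        | exact hHG
        | exact hbf.1
        | exact mul_pos (mul_pos hhpos hhpos) (mul_pos hL1m hmu0)
    have e3 : |K1 g1 v * (L1 g1 v - L1 f1 v) / (HGv * L1 f1 v * L1 g1 v)|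
        ≤ c.K1M * v ^ (-c.mu) * (c.Lt1 * P)
          / (h * (c.L1m * v ^ c.mu) * (c.L1m * v ^ c.mu)) := by
      rw [abs_div, abs_mul, abs_of_pos (mul_pos (mul_pos hHGpos hLfp) hLgp)]
      gcongr
      all_goals first
        | exact hKg_le
        | (rw [abs_sub_comm]; exact hdL)
        | exact hHG
        | exact hbf.1
        | exact hbg.1
        | exact mul_pos (mul_pos hhpos (mul_pos hL1m hmu0)) (mul_pos hL1m hmu0)
    have part2 : |c.D1 / HFv * (K1 f1 v / (L1 f1 v * v ^ c.nu))
          - c.D1 / HGv * (K1 g1 v / (L1 g1 v * v ^ c.nu))|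
        ≤ c.D1 * ((c.Kt1 * v ^ (-c.mu) * P / (h * (c.L1m * v ^ c.mu))
            + c.K1M * v ^ (-c.mu) * (ht * P) / (h * h * (c.L1m * v ^ c.mu))
            + c.K1M * v ^ (-c.mu) * (c.Lt1 * P)
              / (h * (c.L1m * v ^ c.mu) * (c.L1m * v ^ c.mu))) / v ^ c.nu) := by
      rw [idK, abs_mul, abs_of_pos hD1, abs_div, abs_of_pos hnu0]
      have habs := (abs_add_le (((K1 f1 v - K1 g1 v) / (HFv * L1 f1 v))
          + K1 g1 v * (HGv - HFv) / (HFv * HGv * L1 f1 v))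
          (K1 g1 v * (L1 g1 v - L1 f1 v) / (HGv * L1 f1 v * L1 g1 v)))
      have habs2 := abs_add_le ((K1 f1 v - K1 g1 v) / (HFv * L1 f1 v))
          (K1 g1 v * (HGv - HFv) / (HFv * HGv * L1 f1 v))
      gcongr
      calc _ ≤ _ := habs
        _ ≤ _ := by
          refine add_le_add (habs2.trans (add_le_add e1 e2)) e3
    have hsplit : Wf v - Wg v = 2 * c.a * v * (N1 f1 v / L1 f1 v - N1 g1 v / L1 g1 v)
        + (c.D1 / HFv * (K1 f1 v / (L1 f1 v * v ^ c.nu))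
          - c.D1 / HGv * (K1 g1 v / (L1 g1 v * v ^ c.nu))) := by
      rw [hWfdef, hWgdef]; ring
    have hfinal : 2 * c.a * v * (c.Nt1 * P / (c.L1m * v ^ c.mu)
          + (c.N1M * v ^ (-c.mu)) * (c.Lt1 * P) / ((c.L1m * v ^ c.mu) * (c.L1m * v ^ c.mu)))
        + c.D1 * ((c.Kt1 * v ^ (-c.mu) * P / (h * (c.L1m * v ^ c.mu))
            + c.K1M * v ^ (-c.mu) * (ht * P) / (h * h * (c.L1m * v ^ c.mu))
            + c.K1M * v ^ (-c.mu) * (c.Lt1 * P)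
              / (h * (c.L1m * v ^ c.mu) * (c.L1m * v ^ c.mu))) / v ^ c.nu)
        = P * b v := by
      have em : v ^ (-c.mu) = 1 / v ^ c.mu := by
        rw [Real.rpow_neg hv0.le, one_div]
      have ea : v ^ (-(c.mu - 1)) = v / v ^ c.mu := by
        rw [show -(c.mu - 1) = 1 - c.mu by ring, Real.rpow_sub hv0, Real.rpow_one]
      have eb : v ^ (-(3 * c.mu - 1)) = v / (v ^ c.mu * (v ^ c.mu * v ^ c.mu)) := by
        rw [show -(3 * c.mu - 1) = 1 - (c.mu + (c.mu + c.mu)) by ring, Real.rpow_sub hv0,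
          Real.rpow_one, Real.rpow_add hv0, Real.rpow_add hv0]
      have ec : v ^ (-(2 * c.mu + c.nu)) = 1 / (v ^ c.mu * (v ^ c.mu * v ^ c.nu)) := by
        rw [show -(2 * c.mu + c.nu) = 0 - (c.mu + (c.mu + c.nu)) by ring, Real.rpow_sub hv0,
          Real.rpow_zero, Real.rpow_add hv0, Real.rpow_add hv0]
      have ed : v ^ (-(3 * c.mu + c.nu)) = 1 / (v ^ c.mu * (v ^ c.mu * (v ^ c.mu * v ^ c.nu))) := by
        rw [show -(3 * c.mu + c.nu) = 0 - (c.mu + (c.mu + (c.mu + c.nu))) by ring,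
          Real.rpow_sub hv0, Real.rpow_zero, Real.rpow_add hv0, Real.rpow_add hv0,
          Real.rpow_add hv0]
      rw [hbdef]
      simp only [hCadef, hCbdef, hCcdef, hCddef]
      rw [em, ea, eb, ec, ed]
      field_simp
      ring
    calc |Wf v - Wg v| ≤ |2 * c.a * v * (N1 f1 v / L1 f1 v - N1 g1 v / L1 g1 v)|
          + |c.D1 / HFv * (K1 f1 v / (L1 f1 v * v ^ c.nu))
            - c.D1 / HGv * (K1 g1 v / (L1 g1 v * v ^ c.nu))| := by
          rw [hsplit]; exact abs_add_le _ _
      _ ≤ 2 * c.a * v * (c.Nt1 * P / (c.L1m * v ^ c.mu)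
            + (c.N1M * v ^ (-c.mu)) * (c.Lt1 * P) / ((c.L1m * v ^ c.mu) * (c.L1m * v ^ c.mu)))
          + c.D1 * ((c.Kt1 * v ^ (-c.mu) * P / (h * (c.L1m * v ^ c.mu))
            + c.K1M * v ^ (-c.mu) * (ht * P) / (h * h * (c.L1m * v ^ c.mu))
            + c.K1M * v ^ (-c.mu) * (c.Lt1 * P)
              / (h * (c.L1m * v ^ c.mu) * (c.L1m * v ^ c.mu))) / v ^ c.nu) := by
          refine add_le_add ?_ part2
          rw [abs_mul, abs_of_pos (by positivity : (0:ℝ) < 2 * c.a * v)]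
          exact mul_le_mul_of_nonneg_left part1 (by positivity)
      _ = P * b v := hfinal
  -- integral of b is bounded by E1tilG
  have hq2 : (1:ℝ) < c.mu - 1 := by linarith
  have hq3 : (1:ℝ) < 3 * c.mu - 1 := by linarith
  have hq4 : (1:ℝ) < 2 * c.mu + c.nu := by linarith
  have hq5 : (1:ℝ) < 3 * c.mu + c.nu := by linarith
  have hbint : ∀ t : ℝ, s0 ≤ t → IntervalIntegrable b MeasureTheory.volume s0 t := by
    intro t htt
    rw [hbdef]
    exact (((ii_cr hs0 htt).add (ii_cr hs0 htt)).add (ii_cr hs0 htt)).add (ii_cr hs0 htt)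
  have hbIle : ∀ t ∈ Set.Icc s0 r0, ∫ v in s0..t, b v ≤ E1tilG c s0 h ht := by
    intro t htm
    have htt := htm.1
    rw [hbdef]
    rw [intervalIntegral.integral_add
        (((ii_cr hs0 htt).add (ii_cr hs0 htt)).add (ii_cr hs0 htt)) (ii_cr hs0 htt),
      intervalIntegral.integral_add ((ii_cr hs0 htt).add (ii_cr hs0 htt)) (ii_cr hs0 htt),
      intervalIntegral.integral_add (ii_cr hs0 htt) (ii_cr hs0 htt)]
    have i1 := int_cr_le hq2 hs0 htt hCa0
    have i2 := int_cr_le hq3 hs0 htt hCb0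
    have i3 := int_cr_le hq4 hs0 htt hCc0
    have i4 := int_cr_le hq5 hs0 htt hCd0
    refine le_trans (add_le_add (add_le_add (add_le_add i1 i2) i3) i4) (le_of_eq ?_)
    rw [show -(c.mu - 1 - 1) = -(c.mu - 2) by ring,
      show -(3 * c.mu - 1 - 1) = -(3 * c.mu - 2) by ring,
      show -(2 * c.mu + c.nu - 1) = -(2 * c.mu + c.nu - 1) from rfl,
      show -(3 * c.mu + c.nu - 1) = -(3 * c.mu + c.nu - 1) from rfl]
    rw [E1tilG]
    simp only [hCadef, hCbdef, hCcdef, hCddef]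
    rw [Real.rpow_neg hs0.le (c.mu - 2), Real.rpow_neg hs0.le (3 * c.mu - 2),
      Real.rpow_neg hs0.le (2 * c.mu + c.nu - 1), Real.rpow_neg hs0.le (3 * c.mu + c.nu - 1)]
    have p1 : (0:ℝ) < s0 ^ (c.mu - 2) := Real.rpow_pos_of_pos hs0 _
    have p2 : (0:ℝ) < s0 ^ (3 * c.mu - 2) := Real.rpow_pos_of_pos hs0 _
    have p3 : (0:ℝ) < s0 ^ (2 * c.mu + c.nu - 1) := Real.rpow_pos_of_pos hs0 _
    have p4 : (0:ℝ) < s0 ^ (3 * c.mu + c.nu - 1) := Real.rpow_pos_of_pos hs0 _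
    have q1 : (0:ℝ) < c.mu - 2 := by linarith
    have q2 : (0:ℝ) < 3 * c.mu - 2 := by linarith
    have q3 : (0:ℝ) < 2 * c.mu + c.nu - 1 := by linarith
    have q4 : (0:ℝ) < 3 * c.mu + c.nu - 1 := by linarith
    rw [show c.mu - 1 - 1 = c.mu - 2 by ring, show 3 * c.mu - 1 - 1 = 3 * c.mu - 2 by ring]
    field_simp [hL1m.ne', hhpos.ne', p1.ne', p2.ne', p3.ne', p4.ne',
      q1.ne', q2.ne', q3.ne', q4.ne']
    ring
  have hEt0 : 0 ≤ E1tilG c s0 h ht := by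
    have htr := hbIle s0 (Set.left_mem_Icc.mpr hsr')
    rw [intervalIntegral.integral_same] at htr
    exact htr
  -- difference of the inner integrals
  have hIdiff : ∀ t ∈ Set.Icc s0 r0,
      |(∫ v in s0..t, Wf v) - ∫ v in s0..t, Wg v| ≤ P * E1tilG c s0 h ht := by
    intro t htm
    have htt := htm.1
    have hsub : Set.uIcc s0 t ⊆ Set.Icc s0 r0 := by
      rw [Set.uIcc_of_le htt]; exact Set.Icc_subset_Icc le_rfl htm.2
    refine le_trans (abs_intervalIntegral_sub_le htt
      ((hWfc.mono hsub).intervalIntegrable) ((hWgc.mono hsub).intervalIntegrable)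
      ((hbint t htt).const_mul P)
      fun x hx => hWdiff x ⟨hx.1, hx.2.trans htm.2⟩) ?_
    rw [intervalIntegral.integral_const_mul]
    exact mul_le_mul_of_nonneg_left (hbIle t htm) hP0
  -- difference of E1
  have hEdiff : ∀ v ∈ Set.Icc s0 r0,
      |E1f c s0 r0 L1 N1 K1 L2 N2 K2 f1 f2 v - E1f c s0 r0 L1 N1 K1 L2 N2 K2 g1 g2 v|
        ≤ P * E1tilG c s0 h ht := by
    intro v hv
    rw [hEf v, hEg v]
    exact (exp_neg_lip (hIf0 v hv) (hIg0 v hv)).trans (hIdiff v hv)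
  -- continuity of E1
  have hE1fc : ContinuousOn (E1f c s0 r0 L1 N1 K1 L2 N2 K2 f1 f2) (Set.Icc s0 r0) := by
    have hint : MeasureTheory.IntegrableOn Wf (Set.uIcc s0 r0) := by
      rw [Set.uIcc_of_le hsr']
      exact hWfc.integrableOn_compact isCompact_Icc
    have hprim := intervalIntegral.continuousOn_primitive_interval hint
    rw [Set.uIcc_of_le hsr'] at hprim
    exact (Real.continuous_exp.comp_continuousOn hprim.neg).congr fun t _ => hEf t
  have hE1gc : ContinuousOn (E1f c s0 r0 L1 N1 K1 L2 N2 K2 g1 g2) (Set.Icc s0 r0) := by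
    have hint : MeasureTheory.IntegrableOn Wg (Set.uIcc s0 r0) := by
      rw [Set.uIcc_of_le hsr']
      exact hWgc.integrableOn_compact isCompact_Icc
    have hprim := intervalIntegral.continuousOn_primitive_interval hint
    rw [Set.uIcc_of_le hsr'] at hprim
    exact (Real.continuous_exp.comp_continuousOn hprim.neg).congr fun t _ => hEg t
  have hEgle1 : ∀ v ∈ Set.Icc s0 r0, E1f c s0 r0 L1 N1 K1 L2 N2 K2 g1 g2 v ≤ 1 := by
    intro v hv
    rw [hEg v]
    exact Real.exp_le_one_iff.mpr (by linarith [hIg0 v hv])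
  -- final assembly
  have hsubη : Set.uIcc s0 η ⊆ Set.Icc s0 r0 := by
    rw [Set.uIcc_of_le hη1]; exact Set.Icc_subset_Icc le_rfl hη2
  have hFcont : ContinuousOn (fun v => E1f c s0 r0 L1 N1 K1 L2 N2 K2 f1 f2 v
      / (L1 f1 v * v ^ c.nu)) (Set.Icc s0 r0) := by
    refine hE1fc.div ((hAc1 f1 hf1).1.mul (hpow c.nu)) fun v hv => ?_
    exact (mul_pos (hLfpos v hv) (Real.rpow_pos_of_pos (hvpos v hv) _)).ne'
  have hGcont : ContinuousOn (fun v => E1f c s0 r0 L1 N1 K1 L2 N2 K2 g1 g2 v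
      / (L1 g1 v * v ^ c.nu)) (Set.Icc s0 r0) := by
    refine hE1gc.div ((hAc1 g1 hg1).1.mul (hpow c.nu)) fun v hv => ?_
    exact (mul_pos (hLgpos v hv) (Real.rpow_pos_of_pos (hvpos v hv) _)).ne'
  set Bfin : ℝ → ℝ := fun v => P * E1tilG c s0 h ht / c.L1m * v ^ (-(c.mu + c.nu))
      + c.Lt1 * P / c.L1m ^ 2 * v ^ (-(2 * c.mu + c.nu)) with hBdef
  have hBint : IntervalIntegrable Bfin MeasureTheory.volume s0 η := by
    rw [hBdef]
    exact (ii_cr hs0 hη1).add (ii_cr hs0 hη1)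
  simp only [Phi1f]
  refine le_trans (abs_intervalIntegral_sub_le hη1
    ((hFcont.mono hsubη).intervalIntegrable) ((hGcont.mono hsubη).intervalIntegrable)
    hBint ?_) ?_
  · -- pointwise bound for the Φ₁ integrand
    intro v hvm
    have hv : v ∈ Set.Icc s0 r0 := ⟨hvm.1, hvm.2.trans hη2⟩
    have hv0 := hvpos v hv
    have hnu0 : (0:ℝ) < v ^ c.nu := Real.rpow_pos_of_pos hv0 _
    have hmu0 : (0:ℝ) < v ^ c.mu := Real.rpow_pos_of_pos hv0 _
    have hLfp := hLfpos v hv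
    have hLgp := hLgpos v hv
    have hdL : |L1 f1 v - L1 g1 v| ≤ c.Lt1 * P :=
      (hA3 f1 hf1 g1 hg1 v hv).1.trans (mul_le_mul_of_nonneg_left hn1P hLt1.le)
    refine (div_sub_div_bound (mul_pos hLfp hnu0) (mul_pos hLgp hnu0)).trans ?_
    have hEgabs : |E1f c s0 r0 L1 N1 K1 L2 N2 K2 g1 g2 v| ≤ 1 := by
      rw [hEg v, abs_of_pos (Real.exp_pos _)]
      exact Real.exp_le_one_iff.mpr (by linarith [hIg0 v hv])
    have hprod : |L1 f1 v * v ^ c.nu - L1 g1 v * v ^ c.nu| ≤ c.Lt1 * P * v ^ c.nu := by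
      rw [← sub_mul, abs_mul, abs_of_pos hnu0]
      exact mul_le_mul_of_nonneg_right hdL hnu0.le
    have step : |E1f c s0 r0 L1 N1 K1 L2 N2 K2 f1 f2 v
          - E1f c s0 r0 L1 N1 K1 L2 N2 K2 g1 g2 v| / (L1 f1 v * v ^ c.nu)
        + |E1f c s0 r0 L1 N1 K1 L2 N2 K2 g1 g2 v|
          * |L1 f1 v * v ^ c.nu - L1 g1 v * v ^ c.nu|
          / ((L1 f1 v * v ^ c.nu) * (L1 g1 v * v ^ c.nu))
        ≤ P * E1tilG c s0 h ht / (c.L1m * v ^ c.mu * v ^ c.nu)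
          + 1 * (c.Lt1 * P * v ^ c.nu)
            / ((c.L1m * v ^ c.mu * v ^ c.nu) * (c.L1m * v ^ c.mu * v ^ c.nu)) := by
      have s1 : |E1f c s0 r0 L1 N1 K1 L2 N2 K2 f1 f2 v
            - E1f c s0 r0 L1 N1 K1 L2 N2 K2 g1 g2 v| / (L1 f1 v * v ^ c.nu)
          ≤ P * E1tilG c s0 h ht / (c.L1m * v ^ c.mu * v ^ c.nu) := by
        gcongr
        all_goals first
          | exact hEdiff v hv
          | exact (hLf v hv).1
          | exact mul_pos (mul_pos hL1m hmu0) hnu0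
      have s2 : |E1f c s0 r0 L1 N1 K1 L2 N2 K2 g1 g2 v|
            * |L1 f1 v * v ^ c.nu - L1 g1 v * v ^ c.nu|
            / ((L1 f1 v * v ^ c.nu) * (L1 g1 v * v ^ c.nu))
          ≤ 1 * (c.Lt1 * P * v ^ c.nu)
            / ((c.L1m * v ^ c.mu * v ^ c.nu) * (c.L1m * v ^ c.mu * v ^ c.nu)) := by
        gcongr
        all_goals first
          | exact hEgabs
          | exact hprod
          | exact (hLf v hv).1
          | exact (hLg v hv).1
          | exact mul_pos (mul_pos (mul_pos hL1m hmu0) hnu0) (mul_pos (mul_pos hL1m hmu0) hnu0)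
      exact add_le_add s1 s2
    refine step.trans (le_of_eq ?_)
    simp only [hBdef]
    have ec : v ^ (-(c.mu + c.nu)) = 1 / (v ^ c.mu * v ^ c.nu) := by
      rw [show -(c.mu + c.nu) = 0 - (c.mu + c.nu) by ring, Real.rpow_sub hv0,
        Real.rpow_zero, Real.rpow_add hv0]
    have ed : v ^ (-(2 * c.mu + c.nu)) = 1 / (v ^ c.mu * (v ^ c.mu * v ^ c.nu)) := by
      rw [show -(2 * c.mu + c.nu) = 0 - (c.mu + (c.mu + c.nu)) by ring, Real.rpow_sub hv0,
        Real.rpow_zero, Real.rpow_add hv0, Real.rpow_add hv0]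
    rw [ec, ed]
    field_simp
  · -- integral of the bound
    rw [hBdef]
    rw [intervalIntegral.integral_add (ii_cr hs0 hη1) (ii_cr hs0 hη1)]
    have i1 := int_cr_le hq1 hs0 hη1 (by positivity : (0:ℝ) ≤ P * E1tilG c s0 h ht / c.L1m)
    have i2 := int_cr_le hq4 hs0 hη1 (by positivity : (0:ℝ) ≤ c.Lt1 * P / c.L1m ^ 2)
    refine le_trans (add_le_add i1 i2) (le_of_eq ?_)
    rw [show Phi1til c s0 r0 = Phi1tilG c s0 h ht from rfl, Phi1tilG]
    rw [Real.rpow_neg hs0.le (c.mu + c.nu - 1), Real.rpow_neg hs0.le (2 * c.mu + c.nu - 1)]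
    have p1 : (0:ℝ) < s0 ^ (c.mu + c.nu - 1) := Real.rpow_pos_of_pos hs0 _
    have p2 : (0:ℝ) < s0 ^ (2 * c.mu + c.nu - 1) := Real.rpow_pos_of_pos hs0 _
    have q1' : (0:ℝ) < c.mu + c.nu - 1 := by linarith
    have q2' : (0:ℝ) < 2 * c.mu + c.nu - 1 := by linarith
    field_simp
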